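/- If 1 − |μ_n| ≤ n + d ≤ |μ_n| − 1, then there exists w ∈ W^P with ℓ(w) = n such that w^{-1} ⋅ (d × μ) is dominant. (This is the existence part of the implication (2) ⇒ (3) of the combinatorial lemma.) -/

import Mathlib

/-- The Weyl group of type `D_N`: pairs `(σ, ε)` of a permutation of `{1, …, N}` and a
sign vector `ε : {1, …, N} → {±1}` with `∏ i, ε i = 1`. -/
def WeylD (N : ℕ) : Type :=
  {w : Equiv.Perm (Fin N) × (Fin N → ℤ) // (∀ i, w.2 i = 1 ∨ w.2 i = -1) ∧ ∏ i, w.2 i = 1}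

namespace WeylD

/-- The `ℤ`-linear action of `w = (σ, ε)` on `ℤ^N`: `(w · λ)_i = ε_i · λ_{σ⁻¹ i}`. -/
def act {N : ℕ} (w : WeylD N) (lam : Fin N → ℤ) : Fin N → ℤ :=
  fun i => w.1.2 i * lam (w.1.1⁻¹ i)

/-- The inverse of a Weyl group element: `(σ, ε)⁻¹ = (σ⁻¹, ε ∘ σ)`. -/
def inv {N : ℕ} (w : WeylD N) : WeylD N :=
  ⟨(w.1.1⁻¹, fun i => w.1.2 (w.1.1 i)), by
    obtain ⟨h1, h2⟩ := w.2
    exact ⟨fun i => h1 _, by rw [Equiv.prod_comp w.1.1 w.1.2]; exact h2⟩⟩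

end WeylD

/-- The positive roots of the root system of type `D_N`:
`{e_i - e_j : i < j} ∪ {e_i + e_j : i < j}`. -/
def PosRootsD (N : ℕ) : Set (Fin N → ℤ) :=
  {α | ∃ i j : Fin N, i < j ∧
    (α = Pi.single i 1 - Pi.single j 1 ∨ α = Pi.single i 1 + Pi.single j 1)}

/-- The length of `w`: the number of positive roots `α` with `w(α) ∈ -Φ⁺`. -/
noncomputable def WeylD.length {N : ℕ} (w : WeylD N) : ℕ :=
  Set.ncard {α | α ∈ PosRootsD N ∧ -(w.act α) ∈ PosRootsD N}

/-- The half sum of positive roots `ρ = (N-1, N-2, …, 1, 0)` of type `D_N`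
(for `N = n+1` this is `(n, n-1, …, 1, 0)`). -/
def rhoD (N : ℕ) : Fin N → ℤ := fun i => (N : ℤ) - 1 - (i : ℕ)

/-- The dot action `w ⋅ λ = w(λ + ρ) - ρ`. -/
def WeylD.dot {N : ℕ} (w : WeylD N) (lam : Fin N → ℤ) : Fin N → ℤ :=
  w.act (lam + rhoD N) - rhoD N

/-- `λ ∈ ℤ^{n+1}` is dominant if `λ_1 ≥ λ_2 ≥ … ≥ λ_n ≥ |λ_{n+1}|`. -/
def DominantD (n : ℕ) (lam : Fin (n + 1) → ℤ) : Prop :=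
  (∀ i j : Fin (n + 1), i ≤ j → (j : ℕ) < n → lam j ≤ lam i) ∧
  (∀ i : Fin (n + 1), (i : ℕ) < n → |lam (Fin.last n)| ≤ lam i)

/-- The set of Kostant representatives `W^P` for the maximal parabolic `P` of
`SO(n+1,n+1)` obtained by deleting the first simple root: those `w` such that
`w⁻¹(α) ∈ Φ⁺` for every positive root `α` supported on the coordinates `{2, …, n+1}`
(i.e. with vanishing first coordinate). -/
def KostantWP (n : ℕ) : Set (WeylD (n + 1)) :=
  {w | ∀ α ∈ PosRootsD (n + 1), α 0 = 0 → w.inv.act α ∈ PosRootsD (n + 1)}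

lemma single_neg' {N : ℕ} (i : Fin N) (c : ℤ) :
    Pi.single i (-c) = -(Pi.single i c : Fin N → ℤ) := by
  funext k; by_cases h : k = i <;> simp [Pi.single_apply, h]

lemma sub_single_eq {N : ℕ} (i j : Fin N) :
    (Pi.single i 1 - Pi.single j 1 : Fin N → ℤ) = Pi.single i 1 + Pi.single j (-1) := by
  rw [single_neg']; ring

lemma two_single_eq {N : ℕ} {a b i j : Fin N} (hab : a ≠ b) (hij : i ≠ j)
    {c d e f : ℤ} (hc : c ≠ 0) (hd : d ≠ 0)
    (h : (Pi.single a c + Pi.single b d : Fin N → ℤ) = Pi.single i e + Pi.single j f) :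
    (a = i ∧ c = e ∧ b = j ∧ d = f) ∨ (a = j ∧ c = f ∧ b = i ∧ d = e) := by
  have H : ∀ k : Fin N, (if k = a then c else 0) + (if k = b then d else 0)
      = (if k = i then e else 0) + (if k = j then f else 0) := by
    intro k
    have hk := congrFun h k
    simpa only [Pi.add_apply, Pi.single_apply] using hk
  have Ha := H a
  simp only [if_pos rfl, if_neg hab, add_zero] at Ha
  rcases eq_or_ne a i with rfl | hai
  · simp only [if_pos rfl, if_neg hij, add_zero] at Ha
    have hbj : b = j := by
      by_contra hbj'
      have Hb := H b
      simp only [if_neg (Ne.symm hab), if_pos rfl, if_neg hbj', add_zero, zero_add] at Hb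
      exact hd Hb
    subst hbj
    have Hb := H b
    simp only [if_neg (Ne.symm hab), if_pos rfl, zero_add] at Hb
    exact Or.inl ⟨rfl, Ha, rfl, Hb⟩
  · rcases eq_or_ne a j with rfl | haj
    · simp only [if_neg hai, if_pos rfl, zero_add] at Ha
      have hbi : b = i := by
        by_contra hbi'
        have Hb := H b
        simp only [if_neg (Ne.symm hab), if_pos rfl, if_neg hbi', add_zero, zero_add] at Hb
        exact hd Hb
      subst hbi
      have Hb := H b
      simp only [if_pos rfl, if_neg (Ne.symm hab), add_zero, zero_add] at Hb
      exact Or.inr ⟨rfl, Ha, rfl, Hb⟩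
    · simp only [if_neg hai, if_neg haj, add_zero] at Ha
      exact absurd Ha hc

lemma mem_posRootsD_iff {N : ℕ} {a b : Fin N} (hab : a ≠ b) {c d : ℤ}
    (hc : c = 1 ∨ c = -1) (hd : d = 1 ∨ d = -1) :
    (Pi.single a c + Pi.single b d) ∈ PosRootsD N ↔
      ((c = 1 ∧ d = 1) ∨ (c = 1 ∧ d = -1 ∧ a < b) ∨ (c = -1 ∧ d = 1 ∧ b < a)) := by
  have hc0 : c ≠ 0 := by rcases hc with rfl | rfl <;> norm_num
  have hd0 : d ≠ 0 := by rcases hd with rfl | rfl <;> norm_num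
  constructor
  · rintro ⟨i, j, hij, h | h⟩
    · rw [sub_single_eq] at h
      rcases two_single_eq hab hij.ne hc0 hd0 h with ⟨rfl, rfl, rfl, rfl⟩ | ⟨rfl, rfl, rfl, rfl⟩
      · exact Or.inr (Or.inl ⟨rfl, rfl, hij⟩)
      · exact Or.inr (Or.inr ⟨rfl, rfl, hij⟩)
    · rcases two_single_eq hab hij.ne hc0 hd0 h with ⟨rfl, rfl, rfl, rfl⟩ | ⟨rfl, rfl, rfl, rfl⟩
      · exact Or.inl ⟨rfl, rfl⟩
      · exact Or.inl ⟨rfl, rfl⟩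
  · rintro (⟨rfl, rfl⟩ | ⟨rfl, rfl, hlt⟩ | ⟨rfl, rfl, hlt⟩)
    · rcases hab.lt_or_gt with hlt | hlt
      · exact ⟨a, b, hlt, Or.inr rfl⟩
      · exact ⟨b, a, hlt, Or.inr (add_comm _ _)⟩
    · exact ⟨a, b, hlt, Or.inl (by rw [sub_single_eq])⟩
    · exact ⟨b, a, hlt, Or.inl (by rw [sub_single_eq, add_comm])⟩

lemma WeylD.act_single {N : ℕ} (w : WeylD N) (i : Fin N) (c : ℤ) :
    w.act (Pi.single i c) = Pi.single (w.1.1 i) (w.1.2 (w.1.1 i) * c) := by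
  funext k
  simp only [WeylD.act, Pi.single_apply]
  rcases eq_or_ne k (w.1.1 i) with rfl | hk
  · simp
  · rw [if_neg hk, if_neg, mul_zero]
    intro hcon
    exact hk (by rw [← hcon]; simp)

lemma WeylD.act_add {N : ℕ} (w : WeylD N) (x y : Fin N → ℤ) :
    w.act (x + y) = w.act x + w.act y := by
  funext k; simp [WeylD.act]; ring

lemma WeylD.inv_act_apply {N : ℕ} (w : WeylD N) (x : Fin N → ℤ) (k : Fin N) :
    w.inv.act x k = w.1.2 (w.1.1 k) * x (w.1.1 k) := by
  simp [WeylD.inv, WeylD.act]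

/-- The Weyl element used in the proof: the `(n+1)`-cycle together with signs `s` at
positions `0` and `n`. -/
def wE (n : ℕ) (hn : 0 < n) (s : ℤ) (hs : s = 1 ∨ s = -1) : WeylD (n + 1) :=
  ⟨(finRotate (n + 1), fun i => if i = 0 then s else if i = Fin.last n then s else 1), by
    constructor
    · intro i
      dsimp only
      split_ifs <;> [exact hs; exact hs; exact Or.inl rfl]
    · dsimp only
      haveI : NeZero n := ⟨hn.ne'⟩
      rw [Fin.prod_univ_castSucc]
      have h1 : ∀ i : Fin n, (if (Fin.castSucc i) = 0 then s else if (Fin.castSucc i) = Fin.last n then s else 1) = if i = 0 then s else 1 := by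
        intro i
        rw [if_neg (Fin.castSucc_lt_last i).ne]
        congr 1
        simp only [Fin.castSucc_eq_zero_iff]
      simp only [h1]
      rw [Finset.prod_ite_eq' Finset.univ (0 : Fin n) (fun _ => s)]
      simp only [Finset.mem_univ, if_pos, if_pos rfl, if_neg (Fin.last_pos' ..).ne']
      rcases hs with rfl | rfl <;> norm_num⟩

lemma WeylD.inv_act_single {N : ℕ} (w : WeylD N) (k : Fin N) (c : ℤ) :
    w.inv.act (Pi.single (w.1.1 k) c) = Pi.single k (w.1.2 (w.1.1 k) * c) := by
  rw [WeylD.act_single]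
  have h1 : w.inv.1.1 (w.1.1 k) = k := by simp [WeylD.inv]
  rw [h1]
  rfl

lemma wE_perm (n : ℕ) (hn : 0 < n) (s : ℤ) (hs : s = 1 ∨ s = -1) (k : Fin (n + 1)) :
    (wE n hn s hs).1.1 k = k + 1 := finRotate_succ_apply k

lemma wE_eps_zero (n : ℕ) (hn : 0 < n) (s : ℤ) (hs : s = 1 ∨ s = -1) :
    (wE n hn s hs).1.2 0 = s := by simp [wE]

lemma wE_eps_last (n : ℕ) (hn : 0 < n) (s : ℤ) (hs : s = 1 ∨ s = -1) :
    (wE n hn s hs).1.2 (Fin.last n) = s := by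
  show (if Fin.last n = 0 then s else if Fin.last n = Fin.last n then s else 1) = s
  split_ifs with h1 h2
  · rfl
  · rfl
  · exact absurd rfl h2

lemma wE_eps_mid (n : ℕ) (hn : 0 < n) (s : ℤ) (hs : s = 1 ∨ s = -1) (i : Fin (n + 1))
    (h0 : i ≠ 0) (hl : i ≠ Fin.last n) :
    (wE n hn s hs).1.2 i = 1 := by
  show (if i = 0 then s else if i = Fin.last n then s else 1) = 1
  rw [if_neg h0, if_neg hl]

lemma wE_act_single (n : ℕ) (hn : 0 < n) (s : ℤ) (hs : s = 1 ∨ s = -1) (k : Fin (n + 1))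
    (c : ℤ) :
    (wE n hn s hs).act (Pi.single k c)
      = Pi.single (k + 1) ((wE n hn s hs).1.2 (k + 1) * c) := by
  rw [WeylD.act_single, wE_perm]

lemma wE_inv_act_single (n : ℕ) (hn : 0 < n) (s : ℤ) (hs : s = 1 ∨ s = -1) (k : Fin (n + 1))
    (c : ℤ) :
    (wE n hn s hs).inv.act (Pi.single (k + 1) c)
      = Pi.single k ((wE n hn s hs).1.2 (k + 1) * c) := by
  have h := WeylD.inv_act_single (wE n hn s hs) k c
  rwa [wE_perm] at h

lemma rot_pre (n : ℕ) (i : Fin (n + 1)) (hi : i ≠ 0) :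
    ∃ k : Fin (n + 1), k + 1 = i ∧ (k : ℕ) + 1 = (i : ℕ) := by
  have hv : (i : ℕ) ≠ 0 := fun h => hi (Fin.ext (by simpa using h))
  have hv2 : (i : ℕ) ≤ n := Nat.lt_succ_iff.mp i.isLt
  have hlt : (i : ℕ) - 1 < n + 1 := by omega
  have hkv : ((⟨(i : ℕ) - 1, hlt⟩ : Fin (n + 1)) : ℕ) = (i : ℕ) - 1 := rfl
  refine ⟨⟨(i : ℕ) - 1, hlt⟩, ?_, by rw [hkv]; omega⟩
  apply Fin.ext
  rw [Fin.val_add, Fin.val_one', hkv]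
  rw [Nat.mod_eq_of_lt (show 1 < n + 1 by omega)]
  rw [show (i : ℕ) - 1 + 1 = (i : ℕ) by omega]
  exact Nat.mod_eq_of_lt i.isLt

lemma wE_mem_kostant (n : ℕ) (hn : 0 < n) (s : ℤ) (hs : s = 1 ∨ s = -1) :
    wE n hn s hs ∈ KostantWP n := by
  intro α hα h0
  obtain ⟨i, j, hij, hform⟩ := hα
  have hj0 : j ≠ 0 := by
    intro h
    subst h
    exact absurd hij (by simp [Fin.lt_def])
  have hi0 : i ≠ 0 := by
    intro h
    subst h
    rcases hform with rfl | rfl <;>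
      simp [Pi.single_apply, Ne.symm hj0] at h0
  obtain ⟨k, hk, hkv⟩ := rot_pre n i hi0
  obtain ⟨l, hl, hlv⟩ := rot_pre n j hj0
  have hkl : k < l := by
    rw [Fin.lt_def] at hij ⊢
    omega
  have hil : i ≠ Fin.last n := by
    intro h
    subst h
    rw [Fin.lt_def] at hij
    have := Nat.lt_succ_iff.mp j.isLt
    simp only [Fin.val_last] at hij
    omega
  have hei : (wE n hn s hs).1.2 i = 1 := wE_eps_mid n hn s hs i hi0 hil
  have hej := (wE n hn s hs).2.1 j
  rcases hform with rfl | rfl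
  · rw [sub_single_eq, ← hk, ← hl, WeylD.act_add, wE_inv_act_single, wE_inv_act_single,
      hk, hl, hei, one_mul]
    rcases hej with he | he <;> rw [he] <;> norm_num
    · exact (mem_posRootsD_iff hkl.ne (Or.inl rfl) (Or.inr rfl)).mpr
        (Or.inr (Or.inl ⟨rfl, rfl, hkl⟩))
    · exact (mem_posRootsD_iff hkl.ne (Or.inl rfl) (Or.inl rfl)).mpr (Or.inl ⟨rfl, rfl⟩)
  · rw [← hk, ← hl, WeylD.act_add, wE_inv_act_single, wE_inv_act_single,
      hk, hl, hei, one_mul]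
    rcases hej with he | he <;> rw [he] <;> norm_num
    · exact (mem_posRootsD_iff hkl.ne (Or.inl rfl) (Or.inl rfl)).mpr (Or.inl ⟨rfl, rfl⟩)
    · exact (mem_posRootsD_iff hkl.ne (Or.inl rfl) (Or.inr rfl)).mpr
        (Or.inr (Or.inl ⟨rfl, rfl, hkl⟩))

lemma wE_length (n : ℕ) (hn : 0 < n) (s : ℤ) (hs : s = 1 ∨ s = -1) :
    (wE n hn s hs).length = n := by
  have hs0 : s ≠ 0 := by rcases hs with rfl | rfl <;> norm_num
  have hss : s * s = 1 := by rcases hs with rfl | rfl <;> norm_num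
  have hms : -(s * -s) = 1 := by rw [mul_neg, neg_neg, hss]
  set f : Fin n → (Fin (n + 1) → ℤ) :=
    fun k => Pi.single (Fin.castSucc k) 1 + Pi.single (Fin.last n) (-s) with hf
  have hseteq : {α | α ∈ PosRootsD (n+1) ∧ -((wE n hn s hs).act α) ∈ PosRootsD (n+1)}
      = Set.range f := by
    ext α
    simp only [Set.mem_setOf_eq, Set.mem_range]
    constructor
    · rintro ⟨⟨i, j, hij, hform⟩, hneg⟩
      obtain ⟨c, hc, rfl⟩ : ∃ c, (c = 1 ∨ c = -1) ∧ α = Pi.single i 1 + Pi.single j c := by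
        rcases hform with rfl | rfl
        · exact ⟨-1, Or.inr rfl, sub_single_eq i j⟩
        · exact ⟨1, Or.inl rfl, rfl⟩
      have hijv : (i : ℕ) < (j : ℕ) := hij
      have hjle : (j : ℕ) ≤ n := Nat.lt_succ_iff.mp j.isLt
      have hilast : i ≠ Fin.last n := by
        intro h
        have := congrArg Fin.val h
        simp only [Fin.val_last] at this
        omega
      have hvi : ((i + 1 : Fin (n + 1)) : ℕ) = (i : ℕ) + 1 := by
        rw [Fin.val_add_one, if_neg hilast]
      have hi1ne0 : (i + 1 : Fin (n + 1)) ≠ 0 := by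
        intro hcon
        have := congrArg Fin.val hcon
        rw [hvi] at this
        simp at this
      rw [WeylD.act_add, wE_act_single, wE_act_single, neg_add, ← single_neg',
        ← single_neg'] at hneg
      have hne : (i + 1 : Fin (n + 1)) ≠ j + 1 := fun h => hij.ne (add_right_cancel h)
      have he1 := (wE n hn s hs).2.1 (i + 1)
      have he2 := (wE n hn s hs).2.1 (j + 1)
      have hc1 : -((wE n hn s hs).1.2 (i + 1) * 1) = 1 ∨
          -((wE n hn s hs).1.2 (i + 1) * 1) = -1 := by
        rcases he1 with h | h <;> rw [h] <;> norm_num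
      have hc2 : -((wE n hn s hs).1.2 (j + 1) * c) = 1 ∨
          -((wE n hn s hs).1.2 (j + 1) * c) = -1 := by
        rcases he2 with h | h <;> rcases hc with rfl | rfl <;> rw [h] <;> norm_num
      have H := (mem_posRootsD_iff hne hc1 hc2).mp hneg
      rcases eq_or_ne j (Fin.last n) with rfl | hjlast
      · rw [Fin.last_add_one, wE_eps_zero] at H
        have hiltn : (i : ℕ) < n := by
          simp only [Fin.lt_def, Fin.val_last] at hij
          exact hij
        have hcs : c = -s := by
          rcases eq_or_ne (i + 1) (Fin.last n) with hilasteq | hilastne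
          · rw [hilasteq, wE_eps_last] at H
            rcases hs with rfl | rfl <;> rcases hc with rfl | rfl <;> revert H <;> norm_num
          · rw [wE_eps_mid n hn s hs (i + 1) hi1ne0 hilastne] at H
            rcases hs with rfl | rfl <;> rcases hc with rfl | rfl <;> revert H <;> norm_num
        subst hcs
        refine ⟨⟨(i : ℕ), hiltn⟩, ?_⟩
        have hcast : Fin.castSucc (⟨(i : ℕ), hiltn⟩ : Fin n) = i := Fin.ext (by simp)
        rw [hf]
        simp only [hcast]
      · exfalso
        have hjn : (j : ℕ) ≠ n := fun h => hjlast (Fin.ext (by simp [h]))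
        have hvj : ((j + 1 : Fin (n + 1)) : ℕ) = (j : ℕ) + 1 := by
          rw [Fin.val_add_one, if_neg hjlast]
        have hi1last : (i + 1 : Fin (n + 1)) ≠ Fin.last n := by
          intro h
          have := congrArg Fin.val h
          rw [hvi] at this
          simp only [Fin.val_last] at this
          omega
        rw [wE_eps_mid n hn s hs (i + 1) hi1ne0 hi1last] at H
        rcases H with ⟨h1, _⟩ | ⟨h1, _, _⟩ | ⟨_, _, h3⟩
        · norm_num at h1
        · norm_num at h1
        · rw [Fin.lt_def, hvi, hvj] at h3
          omega
    · rintro ⟨k, rfl⟩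
      constructor
      · refine (mem_posRootsD_iff (Fin.castSucc_lt_last k).ne (Or.inl rfl) ?_).mpr ?_
        · rcases hs with rfl | rfl <;> norm_num
        · rcases hs with rfl | rfl
          · right; left
            exact ⟨rfl, by norm_num, Fin.castSucc_lt_last k⟩
          · left
            exact ⟨rfl, by norm_num⟩
      · show -((wE n hn s hs).act (Pi.single (Fin.castSucc k) 1 + Pi.single (Fin.last n) (-s)))
            ∈ PosRootsD (n + 1)
        rw [WeylD.act_add, wE_act_single, wE_act_single, neg_add, ← single_neg',
          ← single_neg', Fin.coeSucc_eq_succ, Fin.last_add_one, wE_eps_zero]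
        have h0succ : k.succ ≠ (0 : Fin (n + 1)) := Fin.succ_ne_zero k
        have he := (wE n hn s hs).2.1 k.succ
        refine (mem_posRootsD_iff h0succ ?_ ?_).mpr ?_
        · rcases he with h | h <;> rw [h] <;> norm_num
        · rw [hms]
          exact Or.inl rfl
        · rcases he with h | h <;> rw [h]
          · right; right
            exact ⟨by norm_num, hms, Fin.succ_pos k⟩
          · left
            exact ⟨by norm_num, hms⟩
  have hfinj : Function.Injective f := by
    intro k k' h
    have hmsne : -s ≠ 0 := neg_ne_zero.mpr hs0
    rcases two_single_eq (Fin.castSucc_lt_last k).ne (Fin.castSucc_lt_last k').ne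
        one_ne_zero hmsne h with ⟨h1, _, _, _⟩ | ⟨h1, _, _, _⟩
    · exact Fin.castSucc_injective n h1
    · exact absurd h1 (Fin.castSucc_lt_last k).ne
  rw [WeylD.length, hseteq, ← Nat.card_coe_set_eq,
    Nat.card_range_of_injective hfinj, Nat.card_eq_fintype_card, Fintype.card_fin]

lemma wE_inv_dot_apply (n : ℕ) (hn : 0 < n) (s : ℤ) (hs : s = 1 ∨ s = -1)
    (x : Fin (n + 1) → ℤ) (m : Fin (n + 1)) :
    (wE n hn s hs).inv.dot x m
      = (wE n hn s hs).1.2 (m + 1) * (x (m + 1) + rhoD (n + 1) (m + 1)) - rhoD (n + 1) m := by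
  show (wE n hn s hs).inv.act (x + rhoD (n + 1)) m - rhoD (n + 1) m = _
  rw [WeylD.inv_act_apply, wE_perm]
  rfl

lemma wE_dot_last (n : ℕ) (hn : 0 < n) (s : ℤ) (hs : s = 1 ∨ s = -1)
    (d : ℤ) (μ : Fin n → ℤ) :
    (wE n hn s hs).inv.dot (Fin.cons d μ) (Fin.last n) = s * (d + n) := by
  rw [wE_inv_dot_apply, Fin.last_add_one, wE_eps_zero, Fin.cons_zero]
  have h0 : rhoD (n + 1) 0 = (n : ℤ) := by simp [rhoD]
  have h1 : rhoD (n + 1) (Fin.last n) = 0 := by simp [rhoD]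
  rw [h0, h1]
  ring

lemma wE_dot_mid (n : ℕ) (hn : 0 < n) (s : ℤ) (hs : s = 1 ∨ s = -1)
    (d : ℤ) (μ : Fin n → ℤ) (k : Fin n) :
    (wE n hn s hs).inv.dot (Fin.cons d μ) (Fin.castSucc k)
      = (if (k : ℕ) + 1 = n then s * μ k else μ k) - 1 := by
  rw [wE_inv_dot_apply, Fin.coeSucc_eq_succ, Fin.cons_succ]
  have hrho1 : rhoD (n + 1) k.succ = (n : ℤ) - 1 - (k : ℕ) := by
    simp only [rhoD, Fin.val_succ]
    push_cast
    ring
  have hrho2 : rhoD (n + 1) (Fin.castSucc k) = (n : ℤ) - (k : ℕ) := by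
    simp only [rhoD, Fin.coe_castSucc]
    push_cast
    ring
  rcases eq_or_ne ((k : ℕ) + 1) n with he | hne
  · have hsucc : k.succ = Fin.last n := Fin.ext (by simp [he])
    rw [hsucc] at hrho1 ⊢
    rw [wE_eps_last, hrho1, hrho2, if_pos he]
    have hkz : ((k : ℕ) : ℤ) = (n : ℤ) - 1 := by omega
    rw [hkz]
    ring
  · have hsne : k.succ ≠ Fin.last n := by
      intro hcon
      apply hne
      have := congrArg Fin.val hcon
      simpa using this
    rw [wE_eps_mid n hn s hs k.succ (Fin.succ_ne_zero k) hsne, if_neg hne, hrho1, hrho2]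
    ring

/-- Existence part of the implication (2) ⇒ (3) of the combinatorial lemma:
if `1 - |μ_n| ≤ n + d ≤ |μ_n| - 1`, then there is a Kostant representative
`w ∈ W^P` of length `n = dim(N_P)/2` such that `w⁻¹ ⋅ (d × μ)` is dominant. -/
theorem range_implies_kostant (n : ℕ) (hn : 2 ≤ n) (hneven : Even n)
    (μ : Fin n → ℤ)
    (hdec : ∀ i j : Fin n, i ≤ j → (j : ℕ) + 1 < n → μ j ≤ μ i)
    (hlast : ∀ i : Fin n, (i : ℕ) + 1 < n → |μ ⟨n - 1, by omega⟩| ≤ μ i)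
    (d : ℤ)
    (h1 : 1 - |μ ⟨n - 1, by omega⟩| ≤ (n : ℤ) + d)
    (h2 : (n : ℤ) + d ≤ |μ ⟨n - 1, by omega⟩| - 1) :
    ∃ w : WeylD (n + 1), w ∈ KostantWP n ∧ w.length = n ∧
      DominantD n (w.inv.dot (Fin.cons d μ)) := by
  have hn0 : 0 < n := by omega
  set m0 : Fin n := ⟨n - 1, by omega⟩ with hm0
  set s : ℤ := if 0 ≤ μ m0 then 1 else -1 with hsdef
  have hs : s = 1 ∨ s = -1 := by
    rw [hsdef]
    split_ifs <;> [exact Or.inl rfl; exact Or.inr rfl]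
  have hsabs : s * μ m0 = |μ m0| := by
    rw [hsdef]
    split_ifs with h
    · rw [one_mul, abs_of_nonneg h]
    · rw [neg_one_mul, abs_of_neg (by omega)]
  have habs : |s| = 1 := by rcases hs with h | h <;> rw [h] <;> norm_num
  have hmid : ∀ k : Fin n, (wE n hn0 s hs).inv.dot (Fin.cons d μ) (Fin.castSucc k)
      = (if (k : ℕ) + 1 = n then |μ m0| else μ k) - 1 := by
    intro k
    rw [wE_dot_mid]
    congr 1
    rcases eq_or_ne ((k : ℕ) + 1) n with he | hne
    · rw [if_pos he, if_pos he]
      have hk : k = m0 := Fin.ext (by rw [hm0]; simp; omega)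
      rw [hk, hsabs]
    · rw [if_neg hne, if_neg hne]
  have hg : ∀ k : Fin n, |μ m0| ≤ (if (k : ℕ) + 1 = n then |μ m0| else μ k) := by
    intro k
    rcases eq_or_ne ((k : ℕ) + 1) n with he | hne
    · rw [if_pos he]
    · rw [if_neg hne]
      exact hlast k (by omega)
  have hgmono : ∀ k l : Fin n, k ≤ l →
      (if (l : ℕ) + 1 = n then |μ m0| else μ l) ≤ (if (k : ℕ) + 1 = n then |μ m0| else μ k) := by
    intro k l hkl
    rcases eq_or_ne ((l : ℕ) + 1) n with hel | hnl
    · rw [if_pos hel]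
      exact hg k
    · rw [if_neg hnl]
      have hln : (l : ℕ) + 1 < n := by have := l.isLt; omega
      rcases eq_or_ne ((k : ℕ) + 1) n with hek | hnk
      · exfalso
        have := Fin.le_def.mp hkl
        omega
      · rw [if_neg hnk]
        exact hdec k l hkl hln
  have hdlast : (wE n hn0 s hs).inv.dot (Fin.cons d μ) (Fin.last n) = s * (d + n) :=
    wE_dot_last n hn0 s hs d μ
  have habs2 : |s * (d + (n : ℤ))| ≤ |μ m0| - 1 := by
    rw [abs_mul, habs, one_mul]
    rw [abs_le]
    constructor <;> [linarith [h1]; linarith [h2]]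
  refine ⟨wE n hn0 s hs, wE_mem_kostant n hn0 s hs, wE_length n hn0 s hs, ?_, ?_⟩
  · intro i j hij hjn
    have hiv : (i : ℕ) < n := lt_of_le_of_lt (Fin.le_def.mp hij) hjn
    have hi : i = Fin.castSucc ⟨(i : ℕ), hiv⟩ := Fin.ext (by simp)
    have hj : j = Fin.castSucc ⟨(j : ℕ), hjn⟩ := Fin.ext (by simp)
    rw [hi, hj, hmid, hmid]
    have : (⟨(i : ℕ), hiv⟩ : Fin n) ≤ ⟨(j : ℕ), hjn⟩ := Fin.le_def.mpr (Fin.le_def.mp hij)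
    linarith [hgmono _ _ this]
  · intro i hin
    have hi : i = Fin.castSucc ⟨(i : ℕ), hin⟩ := Fin.ext (by simp)
    rw [hdlast, hi, hmid]
    have := hg (⟨(i : ℕ), hin⟩ : Fin n)
    linarith [habs2]
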